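/- For every integer s ≥ 2, the function ψ_s(x) = (2^s - 2)/(2^s + 1) + (3/(4^s - 1))·Σ_{m=1}^s 1/(2^{1-m} - x) satisfies ψ_s(0) = 1, ψ_s'(0) = 1, and ψ_s^{(k)}(x) ≥ 0 for all k ∈ ℕ and all x ≤ 0. -/

import Mathlib

lemma psi_aux_hasDerivAt (c x : ℝ) (hx : x ≠ c) (n : ℕ) :
    HasDerivAt (fun y => ((c - y)⁻¹) ^ n) (n * ((c - x)⁻¹) ^ (n + 1)) x := by
  have h0 : c - x ≠ 0 := sub_ne_zero.mpr (Ne.symm hx)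
  have h1 : HasDerivAt (fun y : ℝ => c - y) (-1) x := by
    simpa using (hasDerivAt_id x).const_sub c
  have h2 : HasDerivAt (fun y => (c - y)⁻¹) (- -1 / (c - x) ^ 2) x := h1.inv h0
  have h3 : HasDerivAt (fun y => ((c - y)⁻¹) ^ n) (↑n * (c - x)⁻¹ ^ (n - 1) * (- -1 / (c - x) ^ 2)) x := h2.pow n
  convert h3 using 1
  rcases n with _ | n
  · simp
  · have hinv : (- -1 / (c - x) ^ 2) = ((c - x)⁻¹) ^ 2 := by
      rw [neg_neg, one_div, ← inv_pow]
    rw [hinv, Nat.add_sub_cancel]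
    push_cast
    ring

lemma psi_aux_iteratedDeriv (c : ℝ) (k : ℕ) :
    ∀ x < c, iteratedDeriv k (fun y => (c - y)⁻¹) x
      = (k.factorial : ℝ) * ((c - x)⁻¹) ^ (k + 1) := by
  induction k with
  | zero => intro x hx; simp
  | succ k ih =>
    intro x hx
    rw [iteratedDeriv_succ]
    have hev : iteratedDeriv k (fun y => (c - y)⁻¹)
        =ᶠ[nhds x] fun y => (k.factorial : ℝ) * ((c - y)⁻¹) ^ (k + 1) :=
      Filter.eventuallyEq_of_mem (Iio_mem_nhds hx) fun y hy => ih y hy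
    rw [hev.deriv_eq]
    have hD := ((psi_aux_hasDerivAt c x (ne_of_lt hx) (k + 1)).const_mul (k.factorial : ℝ)).deriv
    rw [hD, Nat.factorial_succ]
    push_cast
    ring

theorem psi_s_absolutely_monotonic (s : ℕ) (hs : 2 ≤ s) :
    let f : ℝ → ℝ := fun x =>
      ((2 : ℝ) ^ s - 2) / ((2 : ℝ) ^ s + 1) +
        (3 / ((4 : ℝ) ^ s - 1)) *
          ∑ m ∈ Finset.Icc 1 s, 1 / ((2 : ℝ) ^ ((1 : ℤ) - (m : ℤ)) - x)
    f 0 = 1 ∧ deriv f 0 = 1 ∧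
      ∀ (k : ℕ) (x : ℝ), x ≤ 0 → 0 ≤ iteratedDeriv k f x := by
  intro f
  have hpos : (0 : ℝ) < (2 : ℝ) ^ ((1 : ℤ) - (s : ℤ)) := by positivity
  have hcm : ∀ x : ℝ, x < (2 : ℝ) ^ ((1 : ℤ) - (s : ℤ)) → ∀ m ∈ Finset.Icc 1 s,
      x < (2 : ℝ) ^ ((1 : ℤ) - (m : ℤ)) := by
    intro x hx m hm
    refine hx.trans_le (zpow_le_zpow_right₀ one_le_two ?_)
    have := (Finset.mem_Icc.mp hm).2
    omega
  have key : ∀ (k : ℕ) (x : ℝ), x < (2 : ℝ) ^ ((1 : ℤ) - (s : ℤ)) →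
      iteratedDeriv k f x =
        (if k = 0 then ((2 : ℝ) ^ s - 2) / ((2 : ℝ) ^ s + 1) else 0) +
          (3 / ((4 : ℝ) ^ s - 1)) * ∑ m ∈ Finset.Icc 1 s,
            (k.factorial : ℝ) * (((2 : ℝ) ^ ((1 : ℤ) - (m : ℤ)) - x)⁻¹) ^ (k + 1) := by
    intro k
    induction k with
    | zero => intro x hx; simp [f, iteratedDeriv_zero, one_div]
    | succ k ih =>
      intro x hx
      rw [iteratedDeriv_succ]
      have hev : iteratedDeriv k f =ᶠ[nhds x] fun y =>
          (if k = 0 then ((2 : ℝ) ^ s - 2) / ((2 : ℝ) ^ s + 1) else 0) +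
            (3 / ((4 : ℝ) ^ s - 1)) * ∑ m ∈ Finset.Icc 1 s,
              (k.factorial : ℝ) * (((2 : ℝ) ^ ((1 : ℤ) - (m : ℤ)) - y)⁻¹) ^ (k + 1) :=
        Filter.eventuallyEq_of_mem (Iio_mem_nhds hx) fun y hy => ih y hy
      rw [hev.deriv_eq]
      have hD : HasDerivAt (fun y =>
          (if k = 0 then ((2 : ℝ) ^ s - 2) / ((2 : ℝ) ^ s + 1) else 0) +
            (3 / ((4 : ℝ) ^ s - 1)) * ∑ m ∈ Finset.Icc 1 s,
              (k.factorial : ℝ) * (((2 : ℝ) ^ ((1 : ℤ) - (m : ℤ)) - y)⁻¹) ^ (k + 1))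
          ((3 / ((4 : ℝ) ^ s - 1)) * ∑ m ∈ Finset.Icc 1 s,
            (k.factorial : ℝ) * (((k : ℝ) + 1) *
              (((2 : ℝ) ^ ((1 : ℤ) - (m : ℤ)) - x)⁻¹) ^ (k + 2))) x := by
        refine HasDerivAt.const_add _ (HasDerivAt.const_mul _ (HasDerivAt.fun_sum ?_))
        intro m hm
        have := (psi_aux_hasDerivAt ((2 : ℝ) ^ ((1 : ℤ) - (m : ℤ))) x
          (ne_of_lt (hcm x hx m hm)) (k + 1)).const_mul (k.factorial : ℝ)
        simpa using this
      rw [hD.deriv, if_neg (Nat.succ_ne_zero k)]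
      rw [zero_add]
      congr 1
      apply Finset.sum_congr rfl
      intro m hm
      rw [Nat.factorial_succ]
      push_cast
      ring
  have h2s : (4 : ℝ) ≤ (2 : ℝ) ^ s := by
    calc (4 : ℝ) = 2 ^ 2 := by norm_num
    _ ≤ 2 ^ s := pow_le_pow_right₀ one_le_two hs
  have h4s : (4 : ℝ) ^ s = ((2 : ℝ) ^ s) ^ 2 := by
    rw [show (4 : ℝ) = 2 ^ 2 by norm_num, ← pow_mul, mul_comm, pow_mul]
  have hsum2 : ∑ m ∈ Finset.Icc 1 s, (1 : ℝ) / ((2 : ℝ) ^ ((1 : ℤ) - (m : ℤ)) - 0)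
      = (2 : ℝ) ^ s - 1 := by
    have : ∀ m ∈ Finset.Icc 1 s, (1 : ℝ) / ((2 : ℝ) ^ ((1 : ℤ) - (m : ℤ)) - 0)
        = (2 : ℝ) ^ ((m : ℤ) - 1) := by
      intro m hm
      rw [sub_zero, one_div, ← zpow_neg, neg_sub]
    rw [Finset.sum_congr rfl this, ← Finset.Ico_add_one_right_eq_Icc, Finset.sum_Ico_eq_sum_range]
    have : ∀ i ∈ Finset.range (s + 1 - 1), (2 : ℝ) ^ (((1 + i : ℕ) : ℤ) - 1) = 2 ^ i := by
      intro i _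
      push_cast
      rw [show ((1 : ℤ) + i - 1) = (i : ℤ) by ring, zpow_natCast]
    rw [Finset.sum_congr rfl this]
    rw [geom_sum_eq (by norm_num : (2:ℝ) ≠ 1)]
    norm_num
  have hsum4 : ∑ m ∈ Finset.Icc 1 s, (((2 : ℝ) ^ ((1 : ℤ) - (m : ℤ)) - 0)⁻¹) ^ 2
      = ((4 : ℝ) ^ s - 1) / 3 := by
    have : ∀ m ∈ Finset.Icc 1 s, (((2 : ℝ) ^ ((1 : ℤ) - (m : ℤ)) - 0)⁻¹) ^ 2
        = (4 : ℝ) ^ ((m : ℤ) - 1) := by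
      intro m hm
      rw [sub_zero, ← zpow_neg, neg_sub, ← zpow_natCast ((2:ℝ) ^ ((m:ℤ) - 1)), ← zpow_mul,
        show (4 : ℝ) = 2 ^ (2 : ℤ) by norm_num, ← zpow_mul]
      ring_nf
    rw [Finset.sum_congr rfl this, ← Finset.Ico_add_one_right_eq_Icc, Finset.sum_Ico_eq_sum_range]
    have : ∀ i ∈ Finset.range (s + 1 - 1), (4 : ℝ) ^ (((1 + i : ℕ) : ℤ) - 1) = 4 ^ i := by
      intro i _
      push_cast
      rw [show ((1 : ℤ) + i - 1) = (i : ℤ) by ring, zpow_natCast]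
    rw [Finset.sum_congr rfl this]
    rw [geom_sum_eq (by norm_num : (4:ℝ) ≠ 1)]
    norm_num
  refine ⟨?_, ?_, ?_⟩
  · show ((2 : ℝ) ^ s - 2) / ((2 : ℝ) ^ s + 1) +
        (3 / ((4 : ℝ) ^ s - 1)) *
          ∑ m ∈ Finset.Icc 1 s, 1 / ((2 : ℝ) ^ ((1 : ℤ) - (m : ℤ)) - 0) = 1
    rw [hsum2, h4s]
    set t := (2 : ℝ) ^ s
    have h1 : t + 1 ≠ 0 := by nlinarith
    have h2 : t ^ 2 - 1 ≠ 0 := by nlinarith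
    field_simp
    ring
  · rw [← iteratedDeriv_one, key 1 0 hpos]
    simp only [Nat.factorial_one, Nat.cast_one, one_mul, if_neg (one_ne_zero)]
    rw [show (1 + 1 : ℕ) = 2 from rfl, hsum4]
    have h2 : (4 : ℝ) ^ s - 1 ≠ 0 := by nlinarith [h4s, h2s]
    field_simp
    norm_num
  · intro k x hx
    rw [key k x (hx.trans_lt hpos)]
    have ha : (0 : ℝ) ≤ 3 / ((4 : ℝ) ^ s - 1) := by
      apply div_nonneg (by norm_num)
      nlinarith [h4s, h2s]
    have hc : (0 : ℝ) ≤ (if k = 0 then ((2 : ℝ) ^ s - 2) / ((2 : ℝ) ^ s + 1) else 0) := by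
      split
      · apply div_nonneg <;> nlinarith
      · exact le_refl 0
    refine add_nonneg hc (mul_nonneg ha (Finset.sum_nonneg fun m hm => ?_))
    have hmx := hcm x (hx.trans_lt hpos) m hm
    have : (0 : ℝ) ≤ ((2 : ℝ) ^ ((1 : ℤ) - (m : ℤ)) - x)⁻¹ := by
      apply inv_nonneg.mpr
      linarith
    positivity
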